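/- arXiv:2504.03552 — 3 statements merged into one kernel-verified Lean document; each statement's English description precedes it below -/
import Mathlib

section
/- Let K be a connected subset of a weighted graph Γ = (V, b, c) such that ∑_{x,y ∈ K, b(x,y)>0} 1/b(x,y) < ∞. Then there exists C > 0 such that for all f in the Neumann form domain, sup_{x∈K} f(x) - inf_{y∈K} f(y) ≤ C · q^{(N)}(f)^{1/2}; in particular the restriction map f ↦ χ_K f is bounded from the Neumann form domain (with form norm) into ℓ^∞. -/
/-- The Neumann form `q^{(N)}(f) = (1/2)∑_{x,y} b(x,y)(f y - f x)² + ∑_x (c x + m x) f x²`. -/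
noncomputable def neumannForm {V : Type*} (b : V → V → ℝ) (c m : V → ℝ) (f : V → ℝ) : ℝ :=
  (1 / 2) * ∑' q : V × V, b q.1 q.2 * (f q.2 - f q.1) ^ 2 +
    ∑' x : V, (c x + m x) * f x ^ 2

/-- From any walk in `K` with positive weights we can extract one whose vertices are
pairwise distinct. -/
private lemma exists_inj_walk {V : Type*} (b : V → V → ℝ) (K : Set V) {x y : V}
    (h : ∃ (n : ℕ) (p : ℕ → V), p 0 = x ∧ p n = y ∧
      ∀ j, 1 ≤ j → j ≤ n → p j ∈ K ∧ p (j - 1) ∈ K ∧ 0 < b (p (j - 1)) (p j)) :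
    ∃ (n : ℕ) (p : ℕ → V), p 0 = x ∧ p n = y ∧
      (∀ j, 1 ≤ j → j ≤ n → p j ∈ K ∧ p (j - 1) ∈ K ∧ 0 < b (p (j - 1)) (p j)) ∧
      ∀ i k, i ≤ n → k ≤ n → p i = p k → i = k := by
  classical
  have hP : ∃ n : ℕ, ∃ p : ℕ → V, p 0 = x ∧ p n = y ∧
      ∀ j, 1 ≤ j → j ≤ n → p j ∈ K ∧ p (j - 1) ∈ K ∧ 0 < b (p (j - 1)) (p j) := h
  set n := Nat.find hP with hn
  obtain ⟨p, hp0, hpn, hstep⟩ := Nat.find_spec hP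
  refine ⟨n, p, hp0, hpn, hstep, ?_⟩
  suffices hinj : ∀ i k, i < k → k ≤ n → p i ≠ p k by
    intro i k hi hk hik
    rcases lt_trichotomy i k with h' | h' | h'
    · exact absurd hik (hinj i k h' hk)
    · exact h'
    · exact absurd hik.symm (hinj k i h' hi)
  intro i k hik hkn heq
  have hnpos : 0 < n := lt_of_lt_of_le (lt_of_le_of_lt (Nat.zero_le i) hik) hkn
  have hlt : n - (k - i) < n := Nat.sub_lt hnpos (by omega)
  apply Nat.find_min hP hlt
  refine ⟨fun j => if j ≤ i then p j else p (j + (k - i)), by simp [hp0], ?_, ?_⟩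
  · by_cases hni : n - (k - i) ≤ i
    · have hi' : n - (k - i) = i := by omega
      have hnk : n = k := by omega
      show (if n - (k - i) ≤ i then p (n - (k - i)) else p (n - (k - i) + (k - i))) = y
      rw [if_pos hni, hi', heq, ← hnk]
      exact hpn
    · simp only [if_neg hni]
      have hsum : n - (k - i) + (k - i) = n := by omega
      rw [hsum, hpn]
  · intro j hj1 hj2
    by_cases hji : j ≤ i
    · have hj1' : j - 1 ≤ i := by omega
      simp only [if_pos hji, if_pos hj1']
      exact hstep j hj1 (by omega)
    · have harr : j + (k - i) - 1 = j - 1 + (k - i) := by omega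
      have hs := hstep (j + (k - i)) (by omega) (by omega)
      rw [harr] at hs
      have e1 : (if j ≤ i then p j else p (j + (k - i))) = p (j + (k - i)) := if_neg hji
      have e2 : (if j - 1 ≤ i then p (j - 1) else p (j - 1 + (k - i)))
          = p (j - 1 + (k - i)) := by
        by_cases hcase : j - 1 ≤ i
        · have hji' : j - 1 = i := by omega
          rw [if_pos hcase, hji', heq]
          congr 1
          omega
        · exact if_neg hcase
      simp only [e1, e2]
      exact hs

/-- if `∑_{x,y ∈ K, b(x,y)>0} 1/b(x,y) < ∞` for a connected subset `K`,
then the oscillation on `K` is controlled by `q^{(N)}(f)^{1/2}` and the restriction map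
`f ↦ χ_K f` is bounded from the Neumann form domain into `ℓ^∞`. -/
theorem connected_subset_summable_reciprocal_weights_bounded_restriction
    {V : Type*} (b : V → V → ℝ) (c m : V → ℝ) (K : Set V)
    (hm : ∀ x, 0 < m x) (hc : ∀ x, 0 ≤ c x) (hb : ∀ x y, 0 ≤ b x y)
    (hKne : K.Nonempty)
    (hconn : ∀ x ∈ K, ∀ y ∈ K, ∃ (n : ℕ) (p : ℕ → V), p 0 = x ∧ p n = y ∧
      ∀ j, 1 ≤ j → j ≤ n → p j ∈ K ∧ p (j - 1) ∈ K ∧ 0 < b (p (j - 1)) (p j))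
    (hrecip : Summable fun q : K × K =>
      if 0 < b q.1.1 q.2.1 then 1 / b q.1.1 q.2.1 else 0) :
    ∃ C > 0, ∀ f : V → ℝ,
      (Summable fun q : V × V => b q.1 q.2 * (f q.2 - f q.1) ^ 2) →
      (Summable fun x : V => (c x + m x) * f x ^ 2) →
      (∀ x ∈ K, ∀ y ∈ K, f x - f y ≤ C * Real.sqrt (neumannForm b c m f)) ∧
      (∀ x ∈ K, |f x| ≤ C * Real.sqrt (neumannForm b c m f)) := by
  classical
  obtain ⟨x₀, hx₀⟩ := hKne
  set S : ℝ := ∑' q : K × K, (if 0 < b q.1.1 q.2.1 then 1 / b q.1.1 q.2.1 else 0) with hSdef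
  have hS0 : 0 ≤ S := tsum_nonneg fun q => by
    by_cases h : 0 < b q.1.1 q.2.1
    · rw [if_pos h]; exact (div_pos one_pos h).le
    · rw [if_neg h]
  have hmx₀ : 0 < Real.sqrt (m x₀) := Real.sqrt_pos.2 (hm x₀)
  refine ⟨Real.sqrt (2 * S) + 1 / Real.sqrt (m x₀) + 1, by positivity, ?_⟩
  intro f hs1 hs2
  set Q := neumannForm b c m f with hQdef
  have hcm : ∀ x, 0 ≤ c x + m x := fun x => by have := hc x; have := (hm x).le; linarith
  have hT0 : 0 ≤ ∑' q : V × V, b q.1 q.2 * (f q.2 - f q.1) ^ 2 :=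
    tsum_nonneg fun q => mul_nonneg (hb _ _) (sq_nonneg _)
  have hR0 : 0 ≤ ∑' x : V, (c x + m x) * f x ^ 2 :=
    tsum_nonneg fun x => mul_nonneg (hcm x) (sq_nonneg _)
  have hTQ : ∑' q : V × V, b q.1 q.2 * (f q.2 - f q.1) ^ 2 ≤ 2 * Q := by
    rw [hQdef]; unfold neumannForm; linarith
  have hQ0 : 0 ≤ Q := by
    rw [hQdef]; unfold neumannForm; linarith
  have hsq0 : 0 ≤ Real.sqrt Q := Real.sqrt_nonneg _
  -- the oscillation bound
  have osc : ∀ x ∈ K, ∀ y ∈ K, f x - f y ≤ Real.sqrt (2 * S) * Real.sqrt Q := by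
    intro x hx y hy
    obtain ⟨n, p, hp0, hpn, hstep, hinj⟩ := exists_inj_walk b K (hconn x hx y hy)
    have hmem : ∀ j < n, p j ∈ K ∧ p (j + 1) ∈ K ∧ 0 < b (p j) (p (j + 1)) := by
      intro j hj
      have h := hstep (j + 1) (by omega) (by omega)
      simpa using ⟨h.2.1, h.1, h.2.2⟩
    set u : ℕ → ℝ := fun j => 1 / Real.sqrt (b (p j) (p (j + 1))) with hu
    set v : ℕ → ℝ := fun j => Real.sqrt (b (p j) (p (j + 1))) * |f (p (j + 1)) - f (p j)|
      with hv
    have huv : ∀ j < n, u j * v j = |f (p (j + 1)) - f (p j)| := by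
      intro j hj
      have hbj := (hmem j hj).2.2
      have hsb : Real.sqrt (b (p j) (p (j + 1))) ≠ 0 := ne_of_gt (Real.sqrt_pos.2 hbj)
      rw [hu, hv]; dsimp only; rw [← mul_assoc, one_div_mul_cancel hsb, one_mul]
    -- bound the first Cauchy–Schwarz factor by S
    have hsum1 : ∑ j ∈ Finset.range n, u j ^ 2 ≤ S := by
      have he : ∀ j < n, u j ^ 2 = 1 / b (p j) (p (j + 1)) := by
        intro j hj
        have hbj := (hmem j hj).2.2
        simp [hu, div_pow, Real.sq_sqrt hbj.le]
      set e : ℕ → K × K := fun j =>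
        if h : j < n then (⟨p j, (hmem j h).1⟩, ⟨p (j + 1), (hmem j h).2.1⟩)
        else (⟨x, hx⟩, ⟨x, hx⟩) with hedef
      have hinjE : ∀ a ∈ Finset.range n, ∀ a' ∈ Finset.range n, e a = e a' → a = a' := by
        intro a ha a' ha' hE
        simp only [Finset.mem_range] at ha ha'
        simp only [hedef, dif_pos ha, dif_pos ha', Prod.mk.injEq, Subtype.mk.injEq] at hE
        exact hinj a a' (by omega) (by omega) hE.1
      have key : ∑ j ∈ Finset.range n, u j ^ 2
          = ∑ q ∈ (Finset.range n).image e,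
              (if 0 < b q.1.1 q.2.1 then 1 / b q.1.1 q.2.1 else 0) := by
        rw [Finset.sum_image hinjE]
        refine Finset.sum_congr rfl fun j hj => ?_
        have hjn := Finset.mem_range.1 hj
        rw [he j hjn]
        simp [hedef, dif_pos hjn, if_pos (hmem j hjn).2.2]
      rw [key]
      exact Summable.sum_le_tsum _ (fun q _ => by
        by_cases h : 0 < b q.1.1 q.2.1
        · rw [if_pos h]; exact (div_pos one_pos h).le
        · rw [if_neg h]) hrecip
    -- bound the second Cauchy–Schwarz factor by 2Q
    have hsum2 : ∑ j ∈ Finset.range n, v j ^ 2 ≤ 2 * Q := by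
      have he : ∀ j < n, v j ^ 2 = b (p j) (p (j + 1)) * (f (p (j + 1)) - f (p j)) ^ 2 := by
        intro j hj
        have hbj := (hmem j hj).2.2
        simp [hv, mul_pow, Real.sq_sqrt hbj.le, sq_abs]
      set e : ℕ → V × V := fun j => (p j, p (j + 1)) with hedef
      have hinjE : ∀ a ∈ Finset.range n, ∀ a' ∈ Finset.range n, e a = e a' → a = a' := by
        intro a ha a' ha' hE
        simp only [Finset.mem_range] at ha ha'
        simp only [hedef, Prod.mk.injEq] at hE
        exact hinj a a' (by omega) (by omega) hE.1
      have key : ∑ j ∈ Finset.range n, v j ^ 2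
          = ∑ q ∈ (Finset.range n).image e, b q.1 q.2 * (f q.2 - f q.1) ^ 2 := by
        rw [Finset.sum_image hinjE]
        refine Finset.sum_congr rfl fun j hj => ?_
        have hjn := Finset.mem_range.1 hj
        rw [he j hjn]
      rw [key]
      exact le_trans
        (Summable.sum_le_tsum _ (fun q _ => mul_nonneg (hb _ _) (sq_nonneg _)) hs1) hTQ
    -- telescoping
    have htele : f x - f y = ∑ j ∈ Finset.range n, (f (p j) - f (p (j + 1))) := by
      rw [Finset.sum_range_sub' (fun i => f (p i)) n, hp0, hpn]
    have habs : f x - f y ≤ ∑ j ∈ Finset.range n, u j * v j := by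
      rw [htele]
      refine Finset.sum_le_sum fun j hj => ?_
      rw [huv j (Finset.mem_range.1 hj), abs_sub_comm]
      exact le_abs_self _
    have hCS := Finset.sum_mul_sq_le_sq_mul_sq (Finset.range n) u v
    have hv0 : 0 ≤ ∑ j ∈ Finset.range n, v j ^ 2 :=
      Finset.sum_nonneg fun j _ => sq_nonneg _
    have h1 : (∑ j ∈ Finset.range n, u j * v j) ^ 2 ≤ 2 * S * Q := by
      have hmul : (∑ j ∈ Finset.range n, u j ^ 2) * (∑ j ∈ Finset.range n, v j ^ 2)
          ≤ S * (2 * Q) := mul_le_mul hsum1 hsum2 hv0 hS0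
      nlinarith [hCS]
    have h2 : ∑ j ∈ Finset.range n, u j * v j ≤ Real.sqrt (2 * S * Q) :=
      Real.le_sqrt_of_sq_le h1
    calc f x - f y ≤ ∑ j ∈ Finset.range n, u j * v j := habs
      _ ≤ Real.sqrt (2 * S * Q) := h2
      _ = Real.sqrt (2 * S) * Real.sqrt Q := Real.sqrt_mul (by positivity) Q
  -- pointwise bound at x₀
  have hx₀bound : |f x₀| ≤ 1 / Real.sqrt (m x₀) * Real.sqrt Q := by
    have h1 : (c x₀ + m x₀) * f x₀ ^ 2 ≤ ∑' x : V, (c x + m x) * f x ^ 2 :=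
      Summable.le_tsum hs2 x₀ fun x _ => mul_nonneg (hcm x) (sq_nonneg _)
    have h2 : m x₀ * f x₀ ^ 2 ≤ Q := by
      have hcx := hc x₀
      have hsq := sq_nonneg (f x₀)
      have : ∑' x : V, (c x + m x) * f x ^ 2 ≤ Q := by
        rw [hQdef]; unfold neumannForm; linarith
      nlinarith
    have h3 : f x₀ ^ 2 ≤ Q / m x₀ := by
      rw [le_div_iff₀ (hm x₀)]; linarith [h2]
    calc |f x₀| = Real.sqrt (f x₀ ^ 2) := (Real.sqrt_sq_eq_abs (f x₀)).symm
      _ ≤ Real.sqrt (Q / m x₀) := Real.sqrt_le_sqrt h3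
      _ = Real.sqrt Q / Real.sqrt (m x₀) := Real.sqrt_div hQ0 (m x₀)
      _ = 1 / Real.sqrt (m x₀) * Real.sqrt Q := by ring
  have hexp : (Real.sqrt (2 * S) + 1 / Real.sqrt (m x₀) + 1) * Real.sqrt Q
      = Real.sqrt (2 * S) * Real.sqrt Q + 1 / Real.sqrt (m x₀) * Real.sqrt Q
        + Real.sqrt Q := by ring
  have hrat : 0 ≤ 1 / Real.sqrt (m x₀) * Real.sqrt Q := by positivity
  constructor
  · intro x hx y hy
    have := osc x hx y hy
    rw [hexp]
    linarith
  · intro x hx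
    have h1 := osc x hx x₀ hx₀
    have h2 := osc x₀ hx₀ x hx
    have h3 : |f x| ≤ |f x - f x₀| + |f x₀| := by
      have := abs_sub_abs_le_abs_sub (f x) (f x₀)
      have := abs_nonneg (f x - f x₀)
      calc |f x| = |(f x - f x₀) + f x₀| := by ring_nf
        _ ≤ |f x - f x₀| + |f x₀| := abs_add_le _ _
    have h4 : |f x - f x₀| ≤ Real.sqrt (2 * S) * Real.sqrt Q := by
      rw [abs_sub_le_iff]
      exact ⟨h1, h2⟩
    rw [hexp]
    linarith
end

section
/- Suppose Γ = (V, b, c) satisfies: there exists a subset K ⊆ V with finite diameter (for the path metric d) and a constant c̃ > 0 such that c(x) + m(x) ≥ c̃ for all x ∈ V \ K. Then there is a continuous embedding of the Neumann form domain into ℓ^∞, i.e. there exists C > 0 with ‖u‖_∞ ≤ C · q^{(N)}(u)^{1/2} for all u in the form domain. -/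
/-- The path (pseudo-)metric on a weighted graph. -/
noncomputable def graphDist {V : Type*} (b : V → V → ℝ) (x y : V) : ℝ :=
  sInf {L : ℝ | ∃ (n : ℕ) (p : ℕ → V), p 0 = x ∧ p n = y ∧
    (∀ j, 1 ≤ j → j ≤ n → 0 < b (p (j - 1)) (p j)) ∧
    L = ∑ j ∈ Finset.Icc 1 n, 1 / b (p (j - 1)) (p j)}

/-- Cutting out a loop from a path. -/
lemma cut_step {V : Type*} (b : V → V → ℝ) (n : ℕ) (p : ℕ → V)
    (hp : ∀ k, 1 ≤ k → k ≤ n → 0 < b (p (k - 1)) (p k))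
    (i j : ℕ) (hij : i < j) (hj : j ≤ n) (he : p i = p j) :
    ∃ (N : ℕ) (q : ℕ → V), N < n ∧ q 0 = p 0 ∧ q N = p n ∧
      (∀ k, 1 ≤ k → k ≤ N → 0 < b (q (k - 1)) (q k)) ∧
      ∑ k ∈ Finset.Icc 1 N, 1 / b (q (k - 1)) (q k) ≤
        ∑ k ∈ Finset.Icc 1 n, 1 / b (p (k - 1)) (p k) := by
  classical
  set d := j - i with hd
  set q : ℕ → V := fun k => if k ≤ i then p k else p (k + d) with hq
  set E : ℕ → ℕ := fun k => if k ≤ i then k else k + d with hE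
  -- the key pointwise identification of edges
  have hedge : ∀ k, 1 ≤ k → k ≤ n - d →
      q (k - 1) = p (E k - 1) ∧ q k = p (E k) ∧ 1 ≤ E k ∧ E k ≤ n := by
    intro k hk1 hkN
    have hEk1 : 1 ≤ E k := by simp only [hE]; split_ifs <;> omega
    have hEkn : E k ≤ n := by simp only [hE]; split_ifs <;> omega
    refine ⟨?_, ?_, hEk1, hEkn⟩
    · by_cases h : k ≤ i
      · have h' : k - 1 ≤ i := by omega
        simp only [hq, hE, if_pos h, if_pos h']
      · simp only [hq, hE, if_neg h]
        by_cases h' : k - 1 ≤ i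
        · have h1 : k - 1 = i := by omega
          have h2 : k + d - 1 = j := by omega
          simp only [h1, he, h2, if_pos (le_refl i)]
        · simp only [if_neg h']
          congr 1
          omega
    · by_cases h : k ≤ i <;> simp [hq, hE, h]
  refine ⟨n - d, q, by omega, by simp [hq], ?_, ?_, ?_⟩
  · by_cases h : n - d ≤ i
    · have hni : n - d = i := by omega
      have hnj : n = j := by omega
      simp only [hq, if_pos h]
      rw [hni, he, hnj]
    · simp only [hq, if_neg h]
      congr 1
      omega
  · intro k hk1 hkN
    obtain ⟨h1, h2, h3, h4⟩ := hedge k hk1 hkN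
    rw [h1, h2]
    exact hp (E k) h3 h4
  · have hterm : ∀ k ∈ Finset.Icc 1 (n - d),
        1 / b (q (k - 1)) (q k) = 1 / b (p (E k - 1)) (p (E k)) := by
      intro k hk
      simp only [Finset.mem_Icc] at hk
      obtain ⟨h1, h2, _, _⟩ := hedge k hk.1 hk.2
      rw [h1, h2]
    rw [Finset.sum_congr rfl hterm]
    have hinj : ∀ x ∈ Finset.Icc 1 (n - d), ∀ y ∈ Finset.Icc 1 (n - d), E x = E y → x = y := by
      intro x _ y _ hxy
      simp only [hE] at hxy
      split_ifs at hxy <;> omega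
    have himg := Finset.sum_image (s := Finset.Icc 1 (n - d)) (g := E)
        (f := fun l => 1 / b (p (l - 1)) (p l)) hinj
    rw [← himg]
    apply Finset.sum_le_sum_of_subset_of_nonneg
    · intro l hl
      simp only [Finset.mem_image, Finset.mem_Icc] at hl ⊢
      obtain ⟨k, hk, rfl⟩ := hl
      have := hedge k hk.1 hk.2
      exact ⟨this.2.2.1, this.2.2.2⟩
    · intro l hl _
      simp only [Finset.mem_Icc] at hl
      exact le_of_lt (div_pos one_pos (hp l hl.1 hl.2))

/-- Loop erasure: any path can be replaced by one with pairwise distinct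
vertices, without increasing the length. -/
lemma erase_loops {V : Type*} (b : V → V → ℝ) :
    ∀ n : ℕ, ∀ p : ℕ → V,
    (∀ k, 1 ≤ k → k ≤ n → 0 < b (p (k - 1)) (p k)) →
    ∃ (N : ℕ) (q : ℕ → V), q 0 = p 0 ∧ q N = p n ∧
      (∀ k, 1 ≤ k → k ≤ N → 0 < b (q (k - 1)) (q k)) ∧
      (∀ i j, i ≤ N → j ≤ N → q i = q j → i = j) ∧
      ∑ k ∈ Finset.Icc 1 N, 1 / b (q (k - 1)) (q k) ≤
        ∑ k ∈ Finset.Icc 1 n, 1 / b (p (k - 1)) (p k) := by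
  intro n
  induction n using Nat.strong_induction_on with
  | _ n IH =>
    intro p hp
    by_cases hinj : ∀ i j, i ≤ n → j ≤ n → p i = p j → i = j
    · exact ⟨n, p, rfl, rfl, hp, hinj, le_refl _⟩
    · push_neg at hinj
      obtain ⟨i, j, hi, hj, heq, hne⟩ := hinj
      rcases lt_or_gt_of_ne hne with h | h
      · obtain ⟨N, q, hN, hq0, hqN, hqpos, hsum⟩ := cut_step b n p hp i j h hj heq
        obtain ⟨N', q', h0, h1, h2, h3, h4⟩ := IH N hN q hqpos
        exact ⟨N', q', h0.trans hq0, h1.trans hqN, h2, h3, h4.trans hsum⟩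
      · obtain ⟨N, q, hN, hq0, hqN, hqpos, hsum⟩ := cut_step b n p hp j i h hi heq.symm
        obtain ⟨N', q', h0, h1, h2, h3, h4⟩ := IH N hN q hqpos
        exact ⟨N', q', h0.trans hq0, h1.trans hqN, h2, h3, h4.trans hsum⟩

lemma sum_Icc_one_shift {N : ℕ} (g : ℕ → ℝ) :
    ∑ k ∈ Finset.Icc 1 N, g k = ∑ i ∈ Finset.range N, g (i + 1) := by
  rw [← Finset.Ico_add_one_right_eq_Icc, Finset.sum_Ico_eq_sum_range]
  simp [Nat.add_comm]
/-- if there is a set `K` of finite intrinsic diameter outside of which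
`c + m` is uniformly bounded below, then the Neumann form domain embeds continuously
into `ℓ^∞`. -/
theorem neumann_domain_embeds_into_linfty {V : Type*}
    (b : V → V → ℝ) (c m : V → ℝ)
    (hm : ∀ x, 0 < m x) (hc : ∀ x, 0 ≤ c x) (hb : ∀ x y, 0 ≤ b x y)
    (hconn : ∀ x y : V, ∃ (n : ℕ) (p : ℕ → V), p 0 = x ∧ p n = y ∧
      ∀ j, 1 ≤ j → j ≤ n → 0 < b (p (j - 1)) (p j))
    (K : Set V) (hKne : K.Nonempty)
    (hdiam : ∃ D : ℝ, ∀ x ∈ K, ∀ y ∈ K, graphDist b x y ≤ D)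
    (ctilde : ℝ) (hctilde : 0 < ctilde)
    (hout : ∀ x ∉ K, ctilde ≤ c x + m x) :
    ∃ C > 0, ∀ u : V → ℝ,
      (Summable fun q : V × V => b q.1 q.2 * (u q.2 - u q.1) ^ 2) →
      (Summable fun x : V => (c x + m x) * u x ^ 2) →
      ∀ x : V, |u x| ≤ C * Real.sqrt (neumannForm b c m u) := by
  classical
  obtain ⟨o, ho⟩ := hKne
  obtain ⟨D, hD⟩ := hdiam
  set A := c o + m o with hAdef
  have hApos : 0 < A := add_pos_of_nonneg_of_pos (hc o) (hm o)
  set E := max D 0 + 1 with hEdef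
  have hEpos : 0 < E := by
    have : (0:ℝ) ≤ max D 0 := le_max_right _ _
    linarith
  refine ⟨Real.sqrt (1 / ctilde) + Real.sqrt (1 / A) + Real.sqrt (2 * E), ?_, ?_⟩
  · have h1 : 0 < Real.sqrt (1 / A) := Real.sqrt_pos.mpr (by positivity)
    have h2 : 0 ≤ Real.sqrt (1 / ctilde) := Real.sqrt_nonneg _
    have h3 : 0 ≤ Real.sqrt (2 * E) := Real.sqrt_nonneg _
    linarith
  intro u h1 h2 x
  set S := neumannForm b c m u with hSdef
  have nonneg1 : ∀ q : V × V, 0 ≤ b q.1 q.2 * (u q.2 - u q.1) ^ 2 :=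
    fun q => mul_nonneg (hb _ _) (sq_nonneg _)
  have nonneg2 : ∀ y, 0 ≤ (c y + m y) * u y ^ 2 := fun y =>
    mul_nonneg (by have := hm y; have := hc y; linarith) (sq_nonneg _)
  have hT1 : (0:ℝ) ≤ ∑' q : V × V, b q.1 q.2 * (u q.2 - u q.1) ^ 2 := tsum_nonneg nonneg1
  have hT2 : (0:ℝ) ≤ ∑' y, (c y + m y) * u y ^ 2 := tsum_nonneg nonneg2
  have hSsplit : S = (1 / 2) * (∑' q : V × V, b q.1 q.2 * (u q.2 - u q.1) ^ 2) +
      ∑' y, (c y + m y) * u y ^ 2 := rfl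
  have hSnn : 0 ≤ S := by rw [hSsplit]; linarith
  have hsqrtS : 0 ≤ Real.sqrt S := Real.sqrt_nonneg _
  have hT2S : (∑' y, (c y + m y) * u y ^ 2) ≤ S := by rw [hSsplit]; linarith
  have hT1S : (∑' q : V × V, b q.1 q.2 * (u q.2 - u q.1) ^ 2) ≤ 2 * S := by
    rw [hSsplit]; linarith
  -- pointwise bound via the potential term
  have key : ∀ (y : V) (a : ℝ), 0 < a → a ≤ c y + m y →
      |u y| ≤ Real.sqrt (1 / a) * Real.sqrt S := by
    intro y a ha hay
    have h' : (c y + m y) * u y ^ 2 ≤ ∑' z, (c z + m z) * u z ^ 2 :=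
      Summable.le_tsum h2 y fun z _ => nonneg2 z
    have hy2 : a * u y ^ 2 ≤ S := by nlinarith [sq_nonneg (u y)]
    have hdiv : u y ^ 2 ≤ S / a := (le_div_iff₀ ha).mpr (by linarith)
    calc |u y| = Real.sqrt (u y ^ 2) := (Real.sqrt_sq_eq_abs _).symm
      _ ≤ Real.sqrt (S / a) := Real.sqrt_le_sqrt hdiv
      _ = Real.sqrt (1 / a) * Real.sqrt S := by
          rw [show S / a = 1 / a * S by ring, Real.sqrt_mul (by positivity) S]
  by_cases hxK : x ∈ K
  · -- bound via a path to `o` inside `K`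
    have hbo : |u o| ≤ Real.sqrt (1 / A) * Real.sqrt S := key o A hApos (le_refl _)
    obtain ⟨n₀, p₀, hp₀x, hp₀o, hp₀pos⟩ := hconn x o
    have hPne : Set.Nonempty {L : ℝ | ∃ (n : ℕ) (p : ℕ → V), p 0 = x ∧ p n = o ∧
        (∀ j, 1 ≤ j → j ≤ n → 0 < b (p (j - 1)) (p j)) ∧
        L = ∑ j ∈ Finset.Icc 1 n, 1 / b (p (j - 1)) (p j)} :=
      ⟨_, n₀, p₀, hp₀x, hp₀o, hp₀pos, rfl⟩
    have hdx : graphDist b x o < E := by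
      refine lt_of_le_of_lt (hD x hxK o ho) ?_
      have : D ≤ max D 0 := le_max_left _ _
      rw [hEdef]; linarith
    rw [graphDist] at hdx
    obtain ⟨L, hL, hLE⟩ := exists_lt_of_csInf_lt hPne hdx
    obtain ⟨n, p, hpx, hpo, hppos, rfl⟩ := hL
    obtain ⟨N, q, hq0, hqN, hqpos, hqinj, hqsum⟩ := erase_loops b n p hppos
    have hsumE : ∑ k ∈ Finset.Icc 1 N, 1 / b (q (k - 1)) (q k) ≤ E :=
      le_of_lt (lt_of_le_of_lt hqsum hLE)
    have hsumnn : 0 ≤ ∑ k ∈ Finset.Icc 1 N, 1 / b (q (k - 1)) (q k) :=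
      Finset.sum_nonneg fun k hk => by
        simp only [Finset.mem_Icc] at hk
        exact le_of_lt (div_pos one_pos (hqpos k hk.1 hk.2))
    -- telescoping
    have htele : ∑ k ∈ Finset.Icc 1 N, (u (q k) - u (q (k - 1))) = u o - u x := by
      rw [sum_Icc_one_shift]
      have : ∀ i ∈ Finset.range N, u (q (i + 1)) - u (q (i + 1 - 1))
          = u (q (i + 1)) - u (q i) := by intro i _; simp
      rw [Finset.sum_congr rfl this, Finset.sum_range_sub (fun i => u (q i)) N, hqN, hq0,
        hpx, hpo]
    -- Cauchy-Schwarz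
    have hCS := Finset.sum_mul_sq_le_sq_mul_sq (Finset.Icc 1 N)
      (fun k => Real.sqrt (1 / b (q (k - 1)) (q k)))
      (fun k => Real.sqrt (b (q (k - 1)) (q k)) * (u (q k) - u (q (k - 1))))
    have hprod : ∀ k ∈ Finset.Icc 1 N,
        Real.sqrt (1 / b (q (k - 1)) (q k)) *
          (Real.sqrt (b (q (k - 1)) (q k)) * (u (q k) - u (q (k - 1))))
          = u (q k) - u (q (k - 1)) := by
      intro k hk
      simp only [Finset.mem_Icc] at hk
      have hbk := hqpos k hk.1 hk.2
      rw [← mul_assoc, ← Real.sqrt_mul (by positivity),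
        one_div_mul_cancel (ne_of_gt hbk), Real.sqrt_one, one_mul]
    have hsq1 : ∀ k ∈ Finset.Icc 1 N,
        Real.sqrt (1 / b (q (k - 1)) (q k)) ^ 2 = 1 / b (q (k - 1)) (q k) := by
      intro k hk
      simp only [Finset.mem_Icc] at hk
      exact Real.sq_sqrt (le_of_lt (div_pos one_pos (hqpos k hk.1 hk.2)))
    have hsq2 : ∀ k ∈ Finset.Icc 1 N,
        (Real.sqrt (b (q (k - 1)) (q k)) * (u (q k) - u (q (k - 1)))) ^ 2
          = b (q (k - 1)) (q k) * (u (q k) - u (q (k - 1))) ^ 2 := by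
      intro k hk
      simp only [Finset.mem_Icc] at hk
      rw [mul_pow, Real.sq_sqrt (le_of_lt (hqpos k hk.1 hk.2))]
    rw [Finset.sum_congr rfl hprod, Finset.sum_congr rfl hsq1, Finset.sum_congr rfl hsq2,
      htele] at hCS
    -- the edge energy is at most the total energy
    have hedgenn : 0 ≤ ∑ k ∈ Finset.Icc 1 N,
        b (q (k - 1)) (q k) * (u (q k) - u (q (k - 1))) ^ 2 :=
      Finset.sum_nonneg fun k _ => mul_nonneg (hb _ _) (sq_nonneg _)
    have hedge2S : ∑ k ∈ Finset.Icc 1 N,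
        b (q (k - 1)) (q k) * (u (q k) - u (q (k - 1))) ^ 2 ≤ 2 * S := by
      have hinj' : ∀ k1 ∈ Finset.Icc 1 N, ∀ k2 ∈ Finset.Icc 1 N,
          ((q (k1 - 1), q k1) : V × V) = (q (k2 - 1), q k2) → k1 = k2 := by
        intro k1 hk1 k2 hk2 hEq
        simp only [Finset.mem_Icc] at hk1 hk2
        exact hqinj k1 k2 hk1.2 hk2.2 (congrArg Prod.snd hEq)
      have himg := Finset.sum_image (s := Finset.Icc 1 N)
        (g := fun k => ((q (k - 1), q k) : V × V))
        (f := fun z : V × V => b z.1 z.2 * (u z.2 - u z.1) ^ 2) hinj'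
      have hle := Summable.sum_le_tsum ((Finset.Icc 1 N).image fun k => ((q (k - 1), q k) : V × V))
        (fun z _ => nonneg1 z) h1
      rw [himg] at hle
      exact le_trans (le_of_eq rfl) (hle.trans hT1S)
    have hbound : (u o - u x) ^ 2 ≤ 2 * E * S := by
      calc (u o - u x) ^ 2 ≤ _ := hCS
        _ ≤ E * (2 * S) := mul_le_mul hsumE hedge2S hedgenn (le_of_lt hEpos)
        _ = 2 * E * S := by ring
    have habs : |u o - u x| ≤ Real.sqrt (2 * E) * Real.sqrt S := by
      rw [← Real.sqrt_sq_eq_abs, ← Real.sqrt_mul (by positivity) S]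
      exact Real.sqrt_le_sqrt hbound
    have htri : |u x| ≤ |u x - u o| + |u o| := by
      have := abs_sub_le (u x) (u o) 0
      simpa using this
    rw [abs_sub_comm] at htri
    have hnn : 0 ≤ Real.sqrt (1 / ctilde) * Real.sqrt S :=
      mul_nonneg (Real.sqrt_nonneg _) hsqrtS
    calc |u x| ≤ |u o - u x| + |u o| := htri
      _ ≤ Real.sqrt (2 * E) * Real.sqrt S + Real.sqrt (1 / A) * Real.sqrt S := by
          linarith
      _ ≤ (Real.sqrt (1 / ctilde) + Real.sqrt (1 / A) + Real.sqrt (2 * E)) * Real.sqrt S := by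
          rw [add_mul, add_mul]; linarith
  · -- outside `K`
    have := key x ctilde hctilde (hout x hxK)
    have h3 : Real.sqrt (1 / ctilde) ≤
        Real.sqrt (1 / ctilde) + Real.sqrt (1 / A) + Real.sqrt (2 * E) := by
      have := Real.sqrt_nonneg (1 / A)
      have := Real.sqrt_nonneg (2 * E)
      linarith
    exact le_trans this (mul_le_mul_of_nonneg_right h3 hsqrtS)
end

section
/- Suppose there exists K ⊆ V with m(K) < ∞ and ∑_{x ∈ V\K} m(x)²/(c(x)+m(x)) < ∞. Then the energy space E embeds continuously into ℓ¹_m: there is a constant C > 0 such that ∑_x m(x)|u(x)| ≤ C ‖u‖_E for all u ∈ E, where ‖u‖_E² = q^{(N)}(u). -/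
/-- Cauchy–Schwarz for tsums of nonnegative reals. -/
lemma tsum_cauchy_schwarz {ι : Type*} (f g : ι → ℝ)
    (hf0 : ∀ i, 0 ≤ f i) (hg0 : ∀ i, 0 ≤ g i)
    (hf : Summable fun i => f i ^ 2) (hg : Summable fun i => g i ^ 2) :
    Summable (fun i => f i * g i) ∧
      ∑' i, f i * g i ≤ Real.sqrt (∑' i, f i ^ 2) * Real.sqrt (∑' i, g i ^ 2) := by
  have hsumm : Summable (fun i => f i * g i) := by
    apply Summable.of_nonneg_of_le (fun i => mul_nonneg (hf0 i) (hg0 i))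
      (fun i => ?_) ((hf.add hg).div_const 2)
    have h2 : 2 * f i * g i ≤ f i ^ 2 + g i ^ 2 := two_mul_le_add_sq (f i) (g i)
    linarith [mul_assoc (2:ℝ) (f i) (g i)]
  refine ⟨hsumm, hsumm.tsum_le_of_sum_le fun s => ?_⟩
  calc ∑ i ∈ s, f i * g i
      ≤ Real.sqrt (∑ i ∈ s, f i ^ 2) * Real.sqrt (∑ i ∈ s, g i ^ 2) :=
        Real.sum_mul_le_sqrt_mul_sqrt s f g
    _ ≤ Real.sqrt (∑' i, f i ^ 2) * Real.sqrt (∑' i, g i ^ 2) := by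
        apply mul_le_mul (Real.sqrt_le_sqrt ?_) (Real.sqrt_le_sqrt ?_)
          (Real.sqrt_nonneg _) (Real.sqrt_nonneg _)
        · exact Summable.sum_le_tsum s (fun i _ => sq_nonneg _) hf
        · exact Summable.sum_le_tsum s (fun i _ => sq_nonneg _) hg

/-- if there is `K` with `m(K) < ∞` and `∑_{x∉K} m(x)²/(c(x)+m(x)) < ∞`,
then the energy space embeds continuously into `ℓ¹_m`. -/
theorem energy_embeds_into_l1 {V : Type*}
    (b : V → V → ℝ) (c m : V → ℝ)
    (hm : ∀ x, 0 < m x) (hc : ∀ x, 0 ≤ c x) (hb : ∀ x y, 0 ≤ b x y)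
    (K : Set V)
    (hK : Summable fun x : K => m x)
    (hsum : Summable fun x : {x : V // x ∉ K} => (m x) ^ 2 / (c x + m x)) :
    ∃ C > 0, ∀ u : V → ℝ,
      (Summable fun q : V × V => b q.1 q.2 * (u q.2 - u q.1) ^ 2) →
      (Summable fun x : V => (c x + m x) * u x ^ 2) →
      Summable (fun x : V => m x * |u x|) ∧
        ∑' x : V, m x * |u x| ≤ C * Real.sqrt (neumannForm b c m u) := by
  have hcm : ∀ x, 0 < c x + m x := fun x => add_pos_of_nonneg_of_pos (hc x) (hm x)
  set A : ℝ := ∑' x : K, m x with hA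
  set B : ℝ := ∑' x : {x : V // x ∉ K}, (m x) ^ 2 / (c x + m x) with hB
  refine ⟨Real.sqrt A + Real.sqrt B + 1, by positivity, fun u hb' hQ => ?_⟩
  set T : ℝ := ∑' x : V, (c x + m x) * u x ^ 2 with hT
  have hT0 : 0 ≤ T := tsum_nonneg fun x => mul_nonneg (hcm x).le (sq_nonneg _)
  have hTle : T ≤ neumannForm b c m u := by
    have h1 : 0 ≤ (1 / 2 : ℝ) * ∑' q : V × V, b q.1 q.2 * (u q.2 - u q.1) ^ 2 := by
      apply mul_nonneg (by norm_num)
      exact tsum_nonneg fun q => mul_nonneg (hb q.1 q.2) (sq_nonneg _)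
    simp only [neumannForm]
    linarith
  -- On K : use f = √m, g = √m |u|
  have hK2 : Summable (fun x : K => (Real.sqrt (m x)) ^ 2) := by
    apply hK.congr; intro x; rw [Real.sq_sqrt (hm x).le]
  have hg2K : Summable (fun x : K => (Real.sqrt (m x) * |u x|) ^ 2) := by
    apply Summable.of_nonneg_of_le (fun x => sq_nonneg _) (fun x => ?_) (hQ.subtype K)
    rw [mul_pow, Real.sq_sqrt (hm x.1).le, sq_abs]
    exact mul_le_mul_of_nonneg_right (le_add_of_nonneg_left (hc x.1)) (sq_nonneg _)
  obtain ⟨hsK, hleK⟩ := tsum_cauchy_schwarz (fun x : K => Real.sqrt (m x))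
    (fun x : K => Real.sqrt (m x) * |u x|) (fun x => Real.sqrt_nonneg _)
    (fun x => mul_nonneg (Real.sqrt_nonneg _) (abs_nonneg _)) hK2 hg2K
  have heqK : (fun x : K => Real.sqrt (m x) * (Real.sqrt (m x) * |u x|)) =
      fun x : K => m x * |u x| := by
    funext x; rw [← mul_assoc, Real.mul_self_sqrt (hm x).le]
  -- On Kᶜ : use f = m/√(c+m), g = √(c+m) |u|
  have hf2c : Summable (fun x : {x : V // x ∉ K} =>
      (m x / Real.sqrt (c x + m x)) ^ 2) := by
    apply hsum.congr; intro x
    rw [div_pow, Real.sq_sqrt (hcm x).le]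
  have hg2c : Summable (fun x : {x : V // x ∉ K} =>
      (Real.sqrt (c x + m x) * |u x|) ^ 2) := by
    apply (hQ.subtype {x | x ∉ K}).congr; intro x
    simp only [Function.comp_apply]
    rw [mul_pow, Real.sq_sqrt (hcm x.1).le, sq_abs]
  obtain ⟨hsC, hleC⟩ := tsum_cauchy_schwarz
    (fun x : {x : V // x ∉ K} => m x / Real.sqrt (c x + m x))
    (fun x : {x : V // x ∉ K} => Real.sqrt (c x + m x) * |u x|)
    (fun x => div_nonneg (hm x).le (Real.sqrt_nonneg _))
    (fun x => mul_nonneg (Real.sqrt_nonneg _) (abs_nonneg _)) hf2c hg2c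
  have heqC : (fun x : {x : V // x ∉ K} =>
      m x / Real.sqrt (c x + m x) * (Real.sqrt (c x + m x) * |u x|)) =
      fun x : {x : V // x ∉ K} => m x * |u x| := by
    funext x
    have hs : Real.sqrt (c ↑x + m ↑x) ≠ 0 := ne_of_gt (Real.sqrt_pos.mpr (hcm x))
    field_simp
  rw [heqK] at hsK hleK
  rw [heqC] at hsC hleC
  have hsCc : Summable (fun x : ↥(Kᶜ) => m x * |u x|) := hsC
  have hsummable : Summable (fun x : V => m x * |u x|) :=
    summable_subtype_and_compl.mp ⟨hsK, hsCc⟩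
  refine ⟨hsummable, ?_⟩
  rw [← hsummable.tsum_subtype_add_tsum_subtype_compl K]
  -- bound the two tsums
  have hTKle : ∑' x : K, (c x + m x) * u x ^ 2 ≤ T :=
    Summable.tsum_le_tsum_of_inj _ Subtype.coe_injective
      (fun x _ => mul_nonneg (hcm x).le (sq_nonneg _))
      (fun x => le_of_eq rfl) (hQ.subtype K) hQ
  have hTCle : ∑' x : {x : V // x ∉ K}, (c x + m x) * u x ^ 2 ≤ T :=
    Summable.tsum_le_tsum_of_inj _ Subtype.coe_injective
      (fun x _ => mul_nonneg (hcm x).le (sq_nonneg _))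
      (fun x => le_of_eq rfl) (hQ.subtype {x | x ∉ K}) hQ
  have hK2eq : ∑' x : K, (Real.sqrt (m x)) ^ 2 = A := by
    rw [hA]; exact tsum_congr fun x => Real.sq_sqrt (hm x).le
  have hf2ceq : ∑' x : {x : V // x ∉ K}, (m x / Real.sqrt (c x + m x)) ^ 2 = B := by
    rw [hB]; exact tsum_congr fun x => by rw [div_pow, Real.sq_sqrt (hcm x).le]
  have hg2Keq : ∑' x : K, (Real.sqrt (m x) * |u x|) ^ 2 ≤ T := by
    refine le_trans (Summable.tsum_le_tsum (fun x => ?_) hg2K (hQ.subtype K)) hTKle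
    rw [mul_pow, Real.sq_sqrt (hm x.1).le, sq_abs]
    exact mul_le_mul_of_nonneg_right (le_add_of_nonneg_left (hc x.1)) (sq_nonneg _)
  have hg2ceq : ∑' x : {x : V // x ∉ K}, (Real.sqrt (c x + m x) * |u x|) ^ 2 = T →
      True := fun _ => trivial
  have hg2ceq' : ∑' x : {x : V // x ∉ K}, (Real.sqrt (c x + m x) * |u x|) ^ 2 ≤ T := by
    refine le_trans (le_of_eq (tsum_congr fun x => ?_)) hTCle
    rw [mul_pow, Real.sq_sqrt (hcm x).le, sq_abs]
  have hsqrtT : Real.sqrt T ≤ Real.sqrt (neumannForm b c m u) := Real.sqrt_le_sqrt hTle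
  have hboundK : ∑' x : K, m x * |u x| ≤ Real.sqrt A * Real.sqrt T := by
    refine hleK.trans ?_
    rw [hK2eq]
    exact mul_le_mul_of_nonneg_left (Real.sqrt_le_sqrt hg2Keq) (Real.sqrt_nonneg _)
  have hboundC : ∑' x : {x : V // x ∉ K}, m x * |u x| ≤ Real.sqrt B * Real.sqrt T := by
    refine hleC.trans ?_
    rw [hf2ceq]
    exact mul_le_mul_of_nonneg_left (Real.sqrt_le_sqrt hg2ceq') (Real.sqrt_nonneg _)
  have hCc : ∑' x : ↥(Kᶜ), m x * |u x| ≤ Real.sqrt B * Real.sqrt T := hboundC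
  calc (∑' x : K, m x * |u x|) + ∑' x : ↥(Kᶜ), m x * |u x|
      ≤ Real.sqrt A * Real.sqrt T + Real.sqrt B * Real.sqrt T := add_le_add hboundK hCc
    _ = (Real.sqrt A + Real.sqrt B) * Real.sqrt T := by ring
    _ ≤ (Real.sqrt A + Real.sqrt B + 1) * Real.sqrt (neumannForm b c m u) := by
        apply mul_le_mul (by linarith) hsqrtT (Real.sqrt_nonneg _) (by positivity)
end
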